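/- Let μ ≥ 2 be an integer and let (s_0,...,s_{n-1}) ∈ N^n with s_0 = 1 be such that every nonzero z ∈ Z^n with ∑_{i<n} s_i z_i = 0 satisfies ⟨z,z⟩ ≥ μ. Then there exists a positive integer s_n with s_n ≤ 1 + √(μ−2)·(μ−1+n/4)^{n/2}·π^{n/2}/(n/2)! such that every nonzero z ∈ Z^{n+1} with ∑_{i≤n} s_i z_i = 0 satisfies ⟨z,z⟩ ≥ μ. -/

import Mathlib

open MeasureTheory Finset Set

lemma lattice_count {n : ℕ} (hn : 0 < n) (R : ℝ) (S : Finset (Fin n → ℤ))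
    (hS : ∀ z ∈ S, (∑ i, (z i : ℝ) ^ 2) ≤ R) :
    (S.card : ℝ) ≤ 2 * (Real.sqrt (R + n / 4) ^ n *
      (Real.sqrt Real.pi ^ n / Real.Gamma ((n : ℝ) / 2 + 1))) := by
  have : Nonempty (Fin n) := ⟨⟨0, hn⟩⟩
  set ρ : ℝ := Real.sqrt (R + n / 4) with hρdef
  have hρ : 0 ≤ ρ := Real.sqrt_nonneg _
  set Ball : Set (Fin n → ℝ) := {x | Real.sqrt (∑ i, x i ^ 2) ≤ ρ} with hBalldef
  have hsummeas : Measurable (fun x : Fin n → ℝ => ∑ i, x i ^ 2) :=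
    Finset.univ.measurable_sum (fun i _ => (measurable_pi_apply i).pow_const 2)
  have hBallmeas : MeasurableSet Ball :=
    measurableSet_le (Real.continuous_sqrt.measurable.comp hsummeas) measurable_const
  have hBallvol : volume Ball =
      ENNReal.ofReal (ρ ^ n * (Real.sqrt Real.pi ^ n / Real.Gamma ((n : ℝ) / 2 + 1))) := by
    have hpre : (MeasurableEquiv.toLp 2 (Fin n → ℝ)).symm ⁻¹' Ball =
        Metric.closedBall (0 : EuclideanSpace ℝ (Fin n)) ρ := by
      ext x
      have h0 : ∀ i, (0 : EuclideanSpace ℝ (Fin n)) i = 0 := fun _ => rfl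
      simp only [h0, Set.mem_preimage, hBalldef, Set.mem_setOf_eq, Metric.mem_closedBall,
        EuclideanSpace.dist_eq, MeasurableEquiv.coe_toLp_symm, MeasurableEquiv.toLp_symm_apply,
        sub_zero, Real.dist_0_eq_abs, sq_abs]
    have := (EuclideanSpace.volume_preserving_symm_measurableEquiv_toLp (Fin n)).measure_preimage
      hBallmeas.nullMeasurableSet
    rw [hpre, EuclideanSpace.volume_closedBall] at this
    rw [← this, Fintype.card_fin, ← ENNReal.ofReal_pow hρ, ← ENNReal.ofReal_mul (by positivity)]
  -- the "toward-origin half cube" around each lattice point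
  set A : (Fin n → ℤ) → Set (Fin n → ℝ) := fun z =>
    (⋂ i, (fun u : Fin n → ℝ => u i) ⁻¹' Set.Ico (-(2⁻¹:ℝ)) 2⁻¹) ∩
      {u | ∑ i, (z i : ℝ) * u i ≤ 0} with hAdef
  have hAmem : ∀ z u, u ∈ A z ↔ (∀ i, -(2⁻¹:ℝ) ≤ u i ∧ u i < 2⁻¹) ∧
      ∑ i, (z i : ℝ) * u i ≤ 0 := by
    intro z u
    simp [hAdef, Set.mem_iInter, Set.mem_Ico]
  have hAmeas : ∀ z, MeasurableSet (A z) := by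
    intro z
    refine (MeasurableSet.iInter fun i => (measurable_pi_apply i) measurableSet_Ico).inter ?_
    exact measurableSet_le
      (Finset.univ.measurable_sum fun i _ => (measurable_pi_apply i).const_mul _)
      measurable_const
  set H : (Fin n → ℤ) → Set (Fin n → ℝ) := fun z =>
    (fun x : Fin n → ℝ => x + fun i => -(z i : ℝ)) ⁻¹' A z with hHdef
  have hHmem : ∀ z x, x ∈ H z ↔ (∀ i, -(2⁻¹:ℝ) ≤ x i - z i ∧ x i - z i < 2⁻¹) ∧
      ∑ i, (z i : ℝ) * (x i - z i) ≤ 0 := by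
    intro z x
    rw [hHdef, Set.mem_preimage, hAmem]
    have h1 : (x + fun i => -(z i : ℝ)) = fun i => x i - z i :=
      funext fun i => by simp [sub_eq_add_neg]
    rw [h1]
  have hHvolA : ∀ z, volume (H z) = volume (A z) := fun z =>
    measure_preimage_add_right volume _ _
  have hHvol : ∀ z : Fin n → ℤ, 1 ≤ 2 * volume (H z) := by
    intro z
    rw [hHvolA]
    set Qc : Set (Fin n → ℝ) := Set.pi Set.univ (fun _ => Set.Icc (-(2⁻¹:ℝ)) 2⁻¹) with hQcdef
    have hQcvol : volume Qc = 1 := by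
      rw [hQcdef, volume_pi_pi]
      simp [Real.volume_Icc]
      norm_num
    set B : Set (Fin n → ℝ) := Qc ∩ {u | ∑ i, (z i : ℝ) * u i ≤ 0} with hBdef
    set B' : Set (Fin n → ℝ) := Qc ∩ {u | 0 ≤ ∑ i, (z i : ℝ) * u i} with hB'def
    have hsub : Qc ⊆ B ∪ B' := by
      intro u hu
      rcases le_total (∑ i, (z i : ℝ) * u i) 0 with h | h
      · exact Or.inl ⟨hu, h⟩
      · exact Or.inr ⟨hu, h⟩
    have hBB' : volume B' = volume B := by
      have hnegpre : Neg.neg ⁻¹' B = B' := by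
        ext u
        simp only [hBdef, hB'def, Set.mem_preimage, Set.mem_inter_iff, hQcdef,
          Set.mem_pi, Set.mem_univ, forall_true_left, Set.mem_Icc, Set.mem_setOf_eq,
          Pi.neg_apply]
        have hsum : ∑ i, (z i : ℝ) * (-u i) = -∑ i, (z i : ℝ) * u i := by
          rw [← Finset.sum_neg_distrib]
          exact Finset.sum_congr rfl fun i _ => by ring
        rw [hsum]
        constructor <;> intro ⟨h1, h2⟩ <;>
          exact ⟨fun i => ⟨by linarith [(h1 i).2], by linarith [(h1 i).1]⟩, by linarith⟩
      rw [← hnegpre, Measure.measure_preimage_neg]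
    -- B is contained in A z up to the null boundary pieces
    have hBA : volume B ≤ volume (A z) := by
      have hcover : B ⊆ A z ∪ ⋃ i, {u : Fin n → ℝ | u i = 2⁻¹} := by
        rintro u ⟨h1, h2⟩
        by_cases hb : ∀ i, u i < 2⁻¹
        · exact Or.inl ((hAmem z u).2 ⟨fun i => ⟨(h1 i trivial).1, hb i⟩, h2⟩)
        · push_neg at hb
          obtain ⟨i, hi⟩ := hb
          exact Or.inr (Set.mem_iUnion.2 ⟨i, le_antisymm (h1 i trivial).2 hi⟩)
      have hnull : volume (⋃ i, {u : Fin n → ℝ | u i = 2⁻¹}) = 0 :=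
        measure_iUnion_null fun i => Measure.pi_hyperplane _ i _
      calc volume B ≤ volume (A z ∪ ⋃ i, {u : Fin n → ℝ | u i = 2⁻¹}) :=
            measure_mono hcover
        _ ≤ volume (A z) + volume (⋃ i, {u : Fin n → ℝ | u i = 2⁻¹}) := measure_union_le _ _
        _ = volume (A z) := by rw [hnull, add_zero]
    calc (1 : ENNReal) = volume Qc := hQcvol.symm
      _ ≤ volume (B ∪ B') := measure_mono hsub
      _ ≤ volume B + volume B' := measure_union_le _ _
      _ = 2 * volume B := by rw [hBB', two_mul]
      _ ≤ 2 * volume (A z) := by exact mul_le_mul_right hBA 2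
  -- each half-cube lies in the ball
  have hHsub : ∀ z ∈ S, H z ⊆ Ball := by
    intro z hz x hx
    obtain ⟨h1, h2⟩ := (hHmem z x).1 hx
    have hterm : ∀ i, x i ^ 2 = (z i : ℝ) ^ 2 + 2 * ((z i : ℝ) * (x i - z i))
        + (x i - z i) ^ 2 := fun i => by ring
    have hu : ∀ i, (x i - z i) ^ 2 ≤ (2⁻¹ : ℝ) ^ 2 := fun i =>
      sq_le_sq' (by linarith [(h1 i).1]) (le_of_lt (h1 i).2)
    have hsum : ∑ i, x i ^ 2 ≤ R + n / 4 := by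
      have e1 : ∑ i, x i ^ 2 = (∑ i, (z i : ℝ) ^ 2)
          + 2 * (∑ i, (z i : ℝ) * (x i - z i)) + ∑ i, (x i - z i) ^ 2 := by
        rw [Finset.mul_sum, ← Finset.sum_add_distrib, ← Finset.sum_add_distrib]
        exact Finset.sum_congr rfl fun i _ => hterm i
      have e2 : ∑ i, (x i - z i) ^ 2 ≤ (n : ℝ) * (2⁻¹ : ℝ) ^ 2 := by
        calc ∑ i, (x i - z i) ^ 2 ≤ ∑ _i : Fin n, (2⁻¹ : ℝ) ^ 2 :=
              Finset.sum_le_sum fun i _ => hu i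
          _ = (n : ℝ) * (2⁻¹ : ℝ) ^ 2 := by
              rw [Finset.sum_const, Finset.card_univ, Fintype.card_fin, nsmul_eq_mul]
      have := hS z hz
      rw [e1]
      nlinarith
    rw [hBalldef]
    exact Real.sqrt_le_sqrt hsum
  -- the half-cubes are pairwise disjoint
  have hdisj : (S : Set (Fin n → ℤ)).PairwiseDisjoint H := by
    intro z hz z' hz' hne
    refine Set.disjoint_left.2 fun x hx hx' => hne ?_
    obtain ⟨h1, _⟩ := (hHmem z x).1 hx
    obtain ⟨h1', _⟩ := (hHmem z' x).1 hx'
    funext i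
    have hr : |((z i - z' i : ℤ) : ℝ)| < 1 := by
      push_cast
      rw [abs_lt]
      constructor <;> linarith [(h1 i).1, (h1 i).2, (h1' i).1, (h1' i).2]
    have : |z i - z' i| < 1 := by
      rw [← Int.cast_abs] at hr
      exact_mod_cast hr
    rw [abs_lt] at this
    omega
  have hHmeas : ∀ z, MeasurableSet (H z) := fun z =>
    (hAmeas z).preimage (measurable_add_const _)
  have hΓ : 0 < Real.Gamma ((n : ℝ) / 2 + 1) := Real.Gamma_pos_of_pos (by positivity)
  have hbUnion : volume (⋃ z ∈ S, H z) = ∑ z ∈ S, volume (H z) :=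
    measure_biUnion_finset hdisj fun z _ => hHmeas z
  have hcard : (S.card : ENNReal) ≤
      ENNReal.ofReal (2 * (ρ ^ n * (Real.sqrt Real.pi ^ n / Real.Gamma ((n : ℝ) / 2 + 1)))) := by
    calc (S.card : ENNReal) = ∑ _z ∈ S, (1 : ENNReal) := by
          rw [Finset.sum_const, nsmul_eq_mul, mul_one]
      _ ≤ ∑ z ∈ S, 2 * volume (H z) := Finset.sum_le_sum fun z _ => hHvol z
      _ = 2 * ∑ z ∈ S, volume (H z) := by rw [Finset.mul_sum]
      _ = 2 * volume (⋃ z ∈ S, H z) := by rw [hbUnion]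
      _ ≤ 2 * volume Ball := mul_le_mul_right
          (measure_mono (Set.iUnion₂_subset fun z hz => hHsub z hz)) 2
      _ = ENNReal.ofReal (2 * (ρ ^ n * (Real.sqrt Real.pi ^ n
            / Real.Gamma ((n : ℝ) / 2 + 1)))) := by
          rw [hBallvol, ENNReal.ofReal_mul (by norm_num : (0:ℝ) ≤ 2),
            ENNReal.ofReal_ofNat]
  rw [← ENNReal.ofReal_natCast] at hcard
  have := (ENNReal.ofReal_le_ofReal_iff (by positivity)).1 hcard
  linarith

lemma one_le_sq_sum {m : ℕ} (y : Fin m → ℤ) (hy : y ≠ 0) : 1 ≤ ∑ i, y i ^ 2 := by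
  obtain ⟨i, hi⟩ := Function.ne_iff.1 hy
  have h1 : 1 ≤ y i ^ 2 := by
    rcases lt_or_gt_of_ne (show y i ≠ 0 by simpa using hi) with h | h <;> nlinarith
  calc (1:ℤ) ≤ y i ^ 2 := h1
    _ ≤ ∑ j, y j ^ 2 := Finset.single_le_sum (fun j _ => sq_nonneg (y j)) (Finset.mem_univ i)

set_option maxHeartbeats 2000000 in
theorem stmt4 (n μ : ℕ) (hn : 1 ≤ n) (hμ : 2 ≤ μ)
    (s : Fin n → ℕ) (hs : ∀ i, 0 < s i) (hs0 : s ⟨0, hn⟩ = 1)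
    (hmin : ∀ z : Fin n → ℤ, z ≠ 0 → (∑ i, (s i : ℤ) * z i) = 0 →
      (μ : ℤ) ≤ ∑ i, z i ^ 2) :
    ∃ sn : ℕ, 0 < sn ∧
      (sn : ℝ) ≤ 1 + Real.sqrt ((μ : ℝ) - 2) * Real.sqrt ((μ : ℝ) - 1 + n / 4) ^ n *
        Real.pi ^ ((n : ℝ) / 2) / Real.Gamma ((n : ℝ) / 2 + 1) ∧
      ∀ z : Fin (n + 1) → ℤ, z ≠ 0 →
        (∑ i, ((Fin.snoc s sn : Fin (n + 1) → ℕ) i : ℤ) * z i) = 0 →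
        (μ : ℤ) ≤ ∑ i, z i ^ 2 := by
  classical
  have hμZ : (2:ℤ) ≤ (μ:ℤ) := by exact_mod_cast hμ
  set K : ℕ := Nat.sqrt (μ - 2) with hKdef
  set box : Finset (Fin n → ℤ) :=
    Fintype.piFinset fun _ : Fin n => Finset.Icc (-(μ:ℤ)) (μ:ℤ) with hboxdef
  set Zm : Finset (Fin n → ℤ) :=
    box.filter (fun z => (∑ i, (s i : ℤ) * z i) < 0 ∧ (∑ i, z i ^ 2) ≤ (μ:ℤ) - 2) with hZmdef
  set badT : Finset ℕ :=
    (Zm ×ˢ Finset.Icc (1:ℤ) (K:ℤ)).image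
      (fun p => ((-(∑ i, (s i : ℤ) * p.1 i)) / p.2).toNat) with hbadTdef
  obtain ⟨sn, hsn1, hsnle, hsngood⟩ :
      ∃ t : ℕ, 1 ≤ t ∧ t ≤ badT.card + 1 ∧ t ∉ badT := by
    by_contra hcon
    push_neg at hcon
    have hsubset : Finset.Icc 1 (badT.card + 1) ⊆ badT := by
      intro t ht
      rw [Finset.mem_Icc] at ht
      exact hcon t ht.1 ht.2
    have := Finset.card_le_card hsubset
    rw [Nat.card_Icc] at this
    omega
  refine ⟨sn, hsn1, ?_, ?_⟩
  · have hΓ : 0 < Real.Gamma ((n:ℝ)/2+1) := Real.Gamma_pos_of_pos (by positivity)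
    have hμR : (2:ℝ) ≤ (μ:ℝ) := by exact_mod_cast hμ
    have hb1 : badT.card ≤ Zm.card * K := by
      calc badT.card ≤ (Zm ×ˢ Finset.Icc (1:ℤ) (K:ℤ)).card := Finset.card_image_le
        _ = Zm.card * (Finset.Icc (1:ℤ) (K:ℤ)).card := Finset.card_product _ _
        _ = Zm.card * K := by rw [Int.card_Icc]; simp
    set Zall : Finset (Fin n → ℤ) := Zm ∪ Zm.image (fun z => -z) with hZalldef
    have hsumneg : ∀ w ∈ Zm, (∑ i, (s i : ℤ) * w i) < 0 := fun w hw =>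
      ((Finset.mem_filter.1 hw).2).1
    have hsqle : ∀ w ∈ Zm, (∑ i, w i ^ 2) ≤ (μ:ℤ) - 2 := fun w hw =>
      ((Finset.mem_filter.1 hw).2).2
    have hdisjZ : Disjoint Zm (Zm.image (fun z => -z)) := by
      rw [Finset.disjoint_left]
      intro a ha hb
      obtain ⟨b, hbZ, hab⟩ := Finset.mem_image.1 hb
      have h1 := hsumneg a ha
      have h2 := hsumneg b hbZ
      have : ∑ i, (s i : ℤ) * a i = -∑ i, (s i : ℤ) * b i := by
        rw [← hab, ← Finset.sum_neg_distrib]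
        exact Finset.sum_congr rfl fun i _ => by simp
      omega
    have hcard2 : Zall.card = 2 * Zm.card := by
      rw [hZalldef, Finset.card_union_of_disjoint hdisjZ,
        Finset.card_image_of_injective _ neg_injective]
      ring
    have hlat := lattice_count (Nat.pos_of_ne_zero (by omega)) ((μ:ℝ) - 2) Zall ?_
    swap
    · intro z hz
      have hZ2 : (∑ i, z i ^ 2) ≤ (μ:ℤ) - 2 := by
        rcases Finset.mem_union.1 hz with h | h
        · exact hsqle z h
        · obtain ⟨b, hbZ, hab⟩ := Finset.mem_image.1 h
          have := hsqle b hbZ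
          rw [← hab]
          simpa using this
      have : ((∑ i, z i ^ 2 : ℤ) : ℝ) ≤ (((μ:ℤ) - 2 : ℤ) : ℝ) := Int.cast_le.2 hZ2
      push_cast at this
      exact this
    have hZmcard : (Zm.card : ℝ) ≤
        Real.sqrt ((μ:ℝ) - 2 + n / 4) ^ n *
          (Real.sqrt Real.pi ^ n / Real.Gamma ((n:ℝ)/2 + 1)) := by
      have hc : (Zall.card : ℝ) = 2 * Zm.card := by exact_mod_cast hcard2
      rw [hc] at hlat
      linarith
    have hKR : (K : ℝ) ≤ Real.sqrt ((μ:ℝ) - 2) := by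
      have h1 : K ^ 2 ≤ μ - 2 := by
        rw [hKdef]
        exact Nat.sqrt_le' (μ - 2)
      have h2 : ((K:ℝ)) ^ 2 ≤ (μ:ℝ) - 2 := by
        have : ((K ^ 2 : ℕ) : ℝ) ≤ ((μ - 2 : ℕ) : ℝ) := by exact_mod_cast h1
        rw [Nat.cast_sub hμ] at this
        push_cast at this
        nlinarith
      have h3 : (0:ℝ) ≤ (K:ℝ) := Nat.cast_nonneg K
      nlinarith [Real.sq_sqrt (show (0:ℝ) ≤ (μ:ℝ) - 2 by linarith),
        Real.sqrt_nonneg ((μ:ℝ) - 2)]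
    have hpow : Real.sqrt ((μ:ℝ) - 2 + n/4) ^ n ≤ Real.sqrt ((μ:ℝ) - 1 + n/4) ^ n :=
      pow_le_pow_left₀ (Real.sqrt_nonneg _) (Real.sqrt_le_sqrt (by linarith)) n
    have hpi : Real.sqrt Real.pi ^ n = Real.pi ^ ((n:ℝ)/2) := by
      rw [Real.sqrt_eq_rpow, ← Real.rpow_natCast (Real.pi ^ ((1:ℝ)/2)) n,
        ← Real.rpow_mul Real.pi_pos.le]
      congr 1
      ring
    have h2 : (Zm.card : ℝ) ≤ Real.sqrt ((μ:ℝ) - 1 + n/4) ^ n *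
        (Real.pi ^ ((n:ℝ)/2) / Real.Gamma ((n:ℝ)/2 + 1)) := by
      rw [← hpi]
      refine hZmcard.trans ?_
      have : (0:ℝ) ≤ Real.sqrt Real.pi ^ n / Real.Gamma ((n:ℝ)/2 + 1) := by positivity
      exact mul_le_mul_of_nonneg_right hpow this
    calc (sn : ℝ) ≤ (badT.card : ℝ) + 1 := by exact_mod_cast hsnle
      _ ≤ (Zm.card : ℝ) * K + 1 := by
          have : ((badT.card : ℕ) : ℝ) ≤ ((Zm.card * K : ℕ) : ℝ) := by exact_mod_cast hb1
          push_cast at this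
          linarith
      _ ≤ Real.sqrt ((μ:ℝ) - 2) * (Real.sqrt ((μ:ℝ) - 1 + n/4) ^ n *
            (Real.pi ^ ((n:ℝ)/2) / Real.Gamma ((n:ℝ)/2 + 1))) + 1 := by
          have := mul_le_mul hKR h2 (Nat.cast_nonneg Zm.card) (Real.sqrt_nonneg _)
          nlinarith [this]
      _ = 1 + Real.sqrt ((μ:ℝ) - 2) * Real.sqrt ((μ:ℝ) - 1 + n/4) ^ n *
            Real.pi ^ ((n:ℝ)/2) / Real.Gamma ((n:ℝ)/2 + 1) := by ring
  · intro z hz hsum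
    set y : Fin n → ℤ := fun i => z i.castSucc with hydef
    set k : ℤ := z (Fin.last n) with hkdef
    have hzy : z = Fin.snoc y k := by
      funext i
      refine Fin.lastCases ?_ ?_ i
      · rw [Fin.snoc_last]
      · intro j; rw [Fin.snoc_castSucc]
    have hsum' : (∑ i, (s i : ℤ) * y i) + (sn : ℤ) * k = 0 := by
      rw [Fin.sum_univ_castSucc] at hsum
      simpa [Fin.snoc_castSucc, Fin.snoc_last] using hsum
    have hsq : (∑ i, z i ^ 2) = (∑ i, y i ^ 2) + k ^ 2 := by
      rw [Fin.sum_univ_castSucc]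
    have hsn1Z : (1:ℤ) ≤ (sn:ℤ) := by exact_mod_cast hsn1
    by_contra hcon
    push_neg at hcon
    have hzsq : (∑ i, z i ^ 2) ≤ (μ:ℤ) - 1 := by omega
    have hk : k ≠ 0 := by
      intro hk0
      have hy : y ≠ 0 := by
        intro hy0
        apply hz
        rw [hzy, hy0, hk0]
        funext i
        refine Fin.lastCases ?_ ?_ i
        · rw [Fin.snoc_last]; rfl
        · intro j; rw [Fin.snoc_castSucc]; rfl
      have h1 := hmin y hy (by rw [hk0, mul_zero, add_zero] at hsum'; exact hsum')
      have h2 : (∑ i, y i ^ 2) ≤ (μ:ℤ) - 1 := by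
        rw [hsq, hk0] at hzsq; simpa using hzsq
      omega
    have hy : y ≠ 0 := by
      intro hy0
      rw [hy0] at hsum'
      simp only [Pi.zero_apply, mul_zero, Finset.sum_const_zero, zero_add] at hsum'
      rcases mul_eq_zero.1 hsum' with h | h
      · exact absurd h (Int.natCast_ne_zero.2 (Nat.one_le_iff_ne_zero.1 hsn1))
      · exact hk h
    have hy1 : 1 ≤ ∑ i, y i ^ 2 := one_le_sq_sum y hy
    have hk1 : 1 ≤ k ^ 2 := by
      rcases lt_or_gt_of_ne hk with h | h <;> nlinarith
    have hysq : (∑ i, y i ^ 2) ≤ (μ:ℤ) - 2 := by omega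
    have hk2 : k ^ 2 ≤ (μ:ℤ) - 2 := by omega
    have hsy : (∑ i, (s i : ℤ) * y i) ≠ 0 := by
      intro h0
      have := hmin y hy h0
      omega
    -- normalize signs
    obtain ⟨w, l, hwZm, hl, heq⟩ :
        ∃ (w : Fin n → ℤ) (l : ℤ), w ∈ Zm ∧ l ∈ Finset.Icc (1:ℤ) (K:ℤ) ∧
          (sn : ℤ) * l = -(∑ i, (s i : ℤ) * w i) := by
      have hbox : ∀ v : Fin n → ℤ, (∑ i, v i ^ 2) ≤ (μ:ℤ) - 2 → v ∈ box := by
        intro v hv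
        rw [hboxdef, Fintype.mem_piFinset]
        intro i
        rw [Finset.mem_Icc]
        have h1 : v i ^ 2 ≤ (μ:ℤ) - 2 := by
          calc v i ^ 2 ≤ ∑ j, v j ^ 2 :=
              Finset.single_le_sum (fun j _ => sq_nonneg (v j)) (Finset.mem_univ i)
            _ ≤ (μ:ℤ) - 2 := hv
        constructor <;> nlinarith
      have hKbound : ∀ l : ℤ, 1 ≤ l → l ^ 2 ≤ (μ:ℤ) - 2 → l ≤ (K:ℤ) := by
        intro l hl1 hl2
        by_contra hcl
        push_neg at hcl
        have h3 : ((K:ℤ) + 1) ^ 2 ≤ l ^ 2 := by nlinarith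
        have h4 : μ - 2 < (K + 1) ^ 2 := by
          simpa [hKdef, Nat.succ_eq_add_one] using Nat.lt_succ_sqrt' (μ - 2)
        have h5 : ((μ:ℤ) - 2) < ((K:ℤ) + 1) ^ 2 := by
          have : ((μ - 2 : ℕ) : ℤ) < (((K + 1) ^ 2 : ℕ) : ℤ) := by exact_mod_cast h4
          push_cast at this
          omega
        nlinarith
      rcases lt_or_gt_of_ne hsy with hneg | hpos
      · refine ⟨y, k, ?_, ?_, by linarith [hsum']⟩
        · rw [hZmdef, Finset.mem_filter]
          exact ⟨hbox y hysq, hneg, hysq⟩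
        · rw [Finset.mem_Icc]
          have hkpos : 1 ≤ k := by nlinarith [hsum', hsn1Z]
          exact ⟨hkpos, hKbound k hkpos hk2⟩
      · refine ⟨-y, -k, ?_, ?_, ?_⟩
        · rw [hZmdef, Finset.mem_filter]
          refine ⟨hbox (-y) (by simpa using hysq), ?_, by simpa using hysq⟩
          have : ∑ i, (s i : ℤ) * (-y) i = -∑ i, (s i : ℤ) * y i := by
            rw [← Finset.sum_neg_distrib]
            exact Finset.sum_congr rfl fun i _ => by simp [mul_comm]
          rw [this]
          omega
        · rw [Finset.mem_Icc]
          have hkpos : 1 ≤ -k := by nlinarith [hsum', hsn1Z]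
          refine ⟨hkpos, hKbound (-k) hkpos (by simpa using hk2)⟩
        · have : ∑ i, (s i : ℤ) * (-y) i = -∑ i, (s i : ℤ) * y i := by
            rw [← Finset.sum_neg_distrib]
            exact Finset.sum_congr rfl fun i _ => by simp [mul_comm]
          rw [this]
          push_cast
          linarith [hsum']
    apply hsngood
    rw [hbadTdef, Finset.mem_image]
    refine ⟨(w, l), Finset.mem_product.2 ⟨hwZm, hl⟩, ?_⟩
    have hlne : l ≠ 0 := by
      have := (Finset.mem_Icc.1 hl).1
      omega
    have : (-(∑ i, (s i : ℤ) * w i)) / l = (sn : ℤ) := by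
      rw [← heq, mul_comm, Int.mul_ediv_cancel_left _ hlne]
    rw [this]
    exact Int.toNat_natCast sn
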